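/- Let B > 0, let σ: ℝ → [−B, B] be continuous and nondecreasing, let x ∈ ℝ^d with ‖x‖₂ ≤ 1, and let y ∈ [−B, B]. Then the function w ↦ ℓ(w; x, y) is convex on ℝ^d and is 2B-Lipschitz, i.e. |ℓ(w; x, y) − ℓ(w'; x, y)| ≤ 2B‖w − w'‖₂ for all w, w' ∈ ℝ^d. -/
import Mathlib


open MeasureTheory
open scoped RealInnerProductSpace

/-- For `B > 0`, a continuous nondecreasing link `σ : ℝ → [-B, B]`,
`x ∈ ℝ^d` with `‖x‖ ≤ 1` and `y ∈ [-B, B]`, the surrogate loss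
`w ↦ ℓ(w; x, y) = ∫₀^{⟨w,x⟩} (σ z - y) dz` is convex on `ℝ^d` and `2B`-Lipschitz. -/
theorem surrogate_loss_convex_lipschitz {d : ℕ} (B : ℝ) (hB : 0 < B)
    (σ : ℝ → ℝ) (hσc : Continuous σ) (hσm : Monotone σ)
    (hσr : ∀ z, σ z ∈ Set.Icc (-B) B)
    (x : EuclideanSpace ℝ (Fin d)) (hx : ‖x‖ ≤ 1)
    (y : ℝ) (hy : y ∈ Set.Icc (-B) B) :
    ConvexOn ℝ Set.univ
        (fun w : EuclideanSpace ℝ (Fin d) => ∫ z in (0:ℝ)..(⟪w, x⟫), (σ z - y)) ∧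
      ∀ w w' : EuclideanSpace ℝ (Fin d),
        |(∫ z in (0:ℝ)..(⟪w, x⟫), (σ z - y)) - ∫ z in (0:ℝ)..(⟪w', x⟫), (σ z - y)| ≤
          2 * B * ‖w - w'‖ := by
  set g : ℝ → ℝ := fun z => σ z - y with hg
  have hgc : Continuous g := hσc.sub continuous_const
  set F : ℝ → ℝ := fun t => ∫ z in (0:ℝ)..t, g z with hF
  have hFd : ∀ t : ℝ, HasDerivAt F (g t) t := fun t =>
    intervalIntegral.integral_hasDerivAt_right (hgc.intervalIntegrable _ _)
      (hgc.stronglyMeasurableAtFilter _ _) hgc.continuousAt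
  have hFderiv : deriv F = g := funext fun t => (hFd t).deriv
  have hFc : Continuous F :=
    continuous_iff_continuousAt.2 fun t => (hFd t).continuousAt
  have hFconv : ConvexOn ℝ Set.univ F := by
    refine MonotoneOn.convexOn_of_deriv convex_univ hFc.continuousOn
      (fun t _ => (hFd t).differentiableAt.differentiableWithinAt) ?_
    rw [hFderiv]
    exact fun a _ b _ hab => sub_le_sub_right (hσm hab) y
  have hinner : ∀ (a b : ℝ) (w w' : EuclideanSpace ℝ (Fin d)),
      ⟪a • w + b • w', x⟫ = a * ⟪w, x⟫ + b * ⟪w', x⟫ := by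
    intro a b w w'
    rw [inner_add_left, real_inner_smul_left, real_inner_smul_left]
  constructor
  · refine ⟨convex_univ, fun w _ w' _ a b ha hb hab => ?_⟩
    simp only [hinner a b w w']
    exact hFconv.2 (Set.mem_univ _) (Set.mem_univ _) ha hb hab
  · intro w w'
    have hsub : F ⟪w, x⟫ - F ⟪w', x⟫ = ∫ z in (⟪w', x⟫)..(⟪w, x⟫), g z := by
      rw [hF]
      exact intervalIntegral.integral_interval_sub_left
        (hgc.intervalIntegrable _ _) (hgc.intervalIntegrable _ _)
    have hbound : |∫ z in (⟪w', x⟫)..(⟪w, x⟫), g z| ≤ 2 * B * |⟪w, x⟫ - ⟪w', x⟫| := by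
      rw [← Real.norm_eq_abs]
      apply intervalIntegral.norm_integral_le_of_norm_le_const
      intro z _
      have h1 := hσr z
      rw [Real.norm_eq_abs, abs_sub_le_iff]
      constructor <;> nlinarith [h1.1, h1.2, hy.1, hy.2]
    have hinner2 : |⟪w, x⟫ - ⟪w', x⟫| ≤ ‖w - w'‖ := by
      rw [← inner_sub_left]
      calc |⟪w - w', x⟫| ≤ ‖w - w'‖ * ‖x‖ := abs_real_inner_le_norm _ _
        _ ≤ ‖w - w'‖ * 1 := by
            exact mul_le_mul_of_nonneg_left hx (norm_nonneg _)
        _ = ‖w - w'‖ := mul_one _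
    calc |F ⟪w, x⟫ - F ⟪w', x⟫| ≤ 2 * B * |⟪w, x⟫ - ⟪w', x⟫| := by rw [hsub]; exact hbound
      _ ≤ 2 * B * ‖w - w'‖ := by
          exact mul_le_mul_of_nonneg_left hinner2 (by linarith)
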